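/- Let X ∈ 𝔄^A (operators of finite A-seminorm in a C*-subalgebra of B(H)). Then X is A-invertible in 𝔄^A (there exists Y ∈ 𝔄^A with A X Y = A Y X = A) if and only if there exists Y ∈ 𝔄^A such that A X Y = A and ker(A X) ⊆ ker(A). -/

import Mathlib

open scoped ComplexOrder ENNReal

/-- A state on a C*-algebra: a positive continuous linear functional of norm one. -/
def IsState {𝔄 : Type*} [NormedRing 𝔄] [StarRing 𝔄] [NormedAlgebra ℂ 𝔄]
    (f : 𝔄 →L[ℂ] ℂ) : Prop :=
  ‖f‖ = 1 ∧ ∀ a : 𝔄, 0 ≤ f (star a * a)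

/-- The `A`-operator seminorm `‖X‖_A`, as a value in `[0, ∞]`:
the supremum over states `f` with `f A ≠ 0` of `√(f(X* A X) / f(A))`. -/
noncomputable def Anorm {𝔄 : Type*} [NormedRing 𝔄] [StarRing 𝔄] [NormedAlgebra ℂ 𝔄]
    (A X : 𝔄) : ℝ≥0∞ :=
  ⨆ f : {f : 𝔄 →L[ℂ] ℂ // IsState f ∧ f A ≠ 0},
    ENNReal.ofReal (Real.sqrt ((f.1 (star X * A * X)).re / (f.1 A).re))

section Helpers

open ContinuousLinearMap
open scoped InnerProduct

set_option maxHeartbeats 1000000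
set_option synthInstance.maxHeartbeats 400000

variable {H : Type*} [NormedAddCommGroup H] [InnerProductSpace ℂ H] [CompleteSpace H]

local notation "⟪" x ", " y "⟫" => @inner ℂ _ _ x y

lemma nonpos_of_forall_pos_le {a C : ℝ} (h : ∀ t : ℝ, 0 < t → a ≤ t * C) : a ≤ 0 := by
  by_contra h'
  push_neg at h'
  rcases le_or_gt C 0 with hC | hC
  · have := h 1 one_pos; nlinarith
  · have h1 := h (a / (2 * C)) (by positivity)
    have h2 : a / (2 * C) * C = a / 2 := by field_simp
    rw [h2] at h1; linarith

lemma nonpos_of_forall_pos_le_sq {a K : ℝ} (h : ∀ t : ℝ, 0 < t → a ≤ t ^ 2 * K) : a ≤ 0 := by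
  refine nonpos_of_forall_pos_le (C := K) fun t ht => ?_
  have := h (Real.sqrt t) (Real.sqrt_pos.mpr ht)
  rwa [Real.sq_sqrt ht.le] at this

lemma posop_apply_eq_zero {T : H →L[ℂ] H} (hT : T.IsPositive) {x : H}
    (hx : (⟪x, T x⟫).re = 0) : T x = 0 := by
  have hsym : (T : H →ₗ[ℂ] H).IsSymmetric :=
    hT.1
  have key : ∀ t : ℝ, 0 ≤ 2 * t * (‖T x‖ ^ 2) + t ^ 2 * (⟪T x, T (T x)⟫).re := by
    intro t
    have h0 := hT.re_inner_nonneg_right (x + (t : ℂ) • T x)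
    have hexp : ⟪x + (t : ℂ) • T x, T (x + (t : ℂ) • T x)⟫
        = ⟪x, T x⟫ + (t : ℂ) * ⟪x, T (T x)⟫ + (t : ℂ) * ⟪T x, T x⟫
          + (t : ℂ) * (t : ℂ) * ⟪T x, T (T x)⟫ := by
      rw [map_add, map_smul]
      simp only [inner_add_left, inner_add_right, inner_smul_left, inner_smul_right,
        Complex.conj_ofReal]
      ring
    have h2 : ⟪x, T (T x)⟫ = ⟪T x, T x⟫ := (hsym x (T x)).symm
    have hTx : ⟪T x, T x⟫ = ((‖T x‖ ^ 2 : ℝ) : ℂ) := by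
      rw [inner_self_eq_norm_sq_to_K]; norm_num
    rw [show (RCLike.re (⟪x + (t : ℂ) • T x, T (x + (t : ℂ) • T x)⟫) : ℝ)
      = (⟪x + (t : ℂ) • T x, T (x + (t : ℂ) • T x)⟫).re from rfl] at h0
    rw [hexp, h2, hTx] at h0
    simp only [Complex.add_re, Complex.mul_re, Complex.ofReal_re, Complex.ofReal_im,
      Complex.mul_im] at h0
    nlinarith [h0, hx]
  have hle : ‖T x‖ ^ 2 ≤ 0 := by
    refine nonpos_of_forall_pos_le (C := (⟪T x, T (T x)⟫).re / 2) fun t ht => ?_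
    have := key (-t)
    nlinarith
  have : ‖T x‖ = 0 := by nlinarith [norm_nonneg (T x)]
  simpa using this

/-- The vector state `T ↦ ⟪v, T v⟫` on a subalgebra of `B(H)`. -/
noncomputable def vstate (𝔄 : StarSubalgebra ℂ (H →L[ℂ] H)) (v : H) : 𝔄 →L[ℂ] ℂ :=
  LinearMap.mkContinuous
    { toFun := fun T : 𝔄 => ⟪v, (T : H →L[ℂ] H) v⟫
      map_add' := by intro T S; simp [inner_add_right]
      map_smul' := by intro c T; simp [inner_smul_right] }
    (‖v‖ * ‖v‖)
    (fun T => by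
      simp only [LinearMap.coe_mk, AddHom.coe_mk]
      calc ‖⟪v, (T : H →L[ℂ] H) v⟫‖ ≤ ‖v‖ * ‖(T : H →L[ℂ] H) v‖ := norm_inner_le_norm _ _
        _ ≤ ‖v‖ * (‖(T : H →L[ℂ] H)‖ * ‖v‖) := by
            gcongr; exact (T : H →L[ℂ] H).le_opNorm v
        _ = ‖v‖ * ‖v‖ * ‖T‖ := by rw [show ‖T‖ = ‖(T : H →L[ℂ] H)‖ from rfl]; ring)

@[simp] lemma vstate_apply (𝔄 : StarSubalgebra ℂ (H →L[ℂ] H)) (v : H) (T : 𝔄) :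
    vstate 𝔄 v T = ⟪v, (T : H →L[ℂ] H) v⟫ := rfl

lemma vstate_isState (𝔄 : StarSubalgebra ℂ (H →L[ℂ] H)) {v : H} (hv : ‖v‖ = 1) :
    IsState (vstate 𝔄 v) := by
  constructor
  · have hub : ‖vstate 𝔄 v‖ ≤ 1 := by
      refine ContinuousLinearMap.opNorm_le_bound _ zero_le_one fun T => ?_
      rw [vstate_apply, one_mul]
      calc ‖⟪v, (T : H →L[ℂ] H) v⟫‖ ≤ ‖v‖ * ‖(T : H →L[ℂ] H) v‖ := norm_inner_le_norm _ _
        _ ≤ ‖v‖ * (‖(T : H →L[ℂ] H)‖ * ‖v‖) := by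
            gcongr; exact (T : H →L[ℂ] H).le_opNorm v
        _ = ‖T‖ := by rw [show ‖T‖ = ‖(T : H →L[ℂ] H)‖ from rfl, hv]; ring
    have hlb : 1 ≤ ‖vstate 𝔄 v‖ := by
      have h1 : vstate 𝔄 v (1 : 𝔄) = 1 := by
        rw [vstate_apply, OneMemClass.coe_one, ContinuousLinearMap.one_apply,
          inner_self_eq_norm_sq_to_K, hv]
        norm_num
      have hb := (vstate 𝔄 v).le_opNorm (1 : 𝔄)
      rw [h1] at hb
      have hone : ‖(1 : 𝔄)‖ ≤ 1 := by
        show ‖((1 : 𝔄) : H →L[ℂ] H)‖ ≤ 1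
        rw [OneMemClass.coe_one]
        exact ContinuousLinearMap.norm_id_le
      have hno : ‖(1:ℂ)‖ = (1:ℝ) := by simp
      rw [hno] at hb
      nlinarith [norm_nonneg (vstate 𝔄 v)]
    exact le_antisymm hub hlb
  · intro a
    have key : vstate 𝔄 v (star a * a) = ((‖(a : H →L[ℂ] H) v‖ ^ 2 : ℝ) : ℂ) := by
      rw [vstate_apply]
      simp only [MulMemClass.coe_mul, StarMemClass.coe_star]
      rw [ContinuousLinearMap.star_eq_adjoint, ContinuousLinearMap.mul_apply,
        ContinuousLinearMap.adjoint_inner_right, inner_self_eq_norm_sq_to_K]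
      norm_cast
    rw [key, Complex.le_def]
    constructor
    · simp only [Complex.ofReal_re, Complex.zero_re]
      positivity
    · simp only [Complex.ofReal_im, Complex.zero_im]

lemma ker_stable (𝔄 : StarSubalgebra ℂ (H →L[ℂ] H)) (A : 𝔄)
    (hA : 0 ≤ (A : H →L[ℂ] H)) (hA0 : A ≠ 0) (Y : 𝔄) (hY : Anorm A Y ≠ ⊤)
    {u : H} (hu : (A : H →L[ℂ] H) u = 0) :
    (A : H →L[ℂ] H) ((Y : H →L[ℂ] H) u) = 0 := by
  have hAp : (A : H →L[ℂ] H).IsPositive :=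
    (ContinuousLinearMap.nonneg_iff_isPositive _).mp hA
  have hAsym : ((A : H →L[ℂ] H) : H →ₗ[ℂ] H).IsSymmetric :=
    hAp.1
  set B : 𝔄 := star Y * A * Y with hBdef
  have hBcoe : (B : H →L[ℂ] H)
      = ((Y : H →L[ℂ] H)†) ∘L (A : H →L[ℂ] H) ∘L (Y : H →L[ℂ] H) := by
    rw [hBdef]
    simp only [MulMemClass.coe_mul, StarMemClass.coe_star]
    rw [ContinuousLinearMap.star_eq_adjoint]
    rfl
  have hBp : (B : H →L[ℂ] H).IsPositive := by
    rw [hBcoe]; exact hAp.adjoint_conj _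
  have hBsym : ((B : H →L[ℂ] H) : H →ₗ[ℂ] H).IsSymmetric :=
    hBp.1
  set m : ℝ := (Anorm A Y).toReal with hm
  have hm0 : 0 ≤ m := ENNReal.toReal_nonneg
  -- Step 1: the basic state inequality
  have C1 : ∀ v : H, (⟪v, (A : H →L[ℂ] H) v⟫).re ≠ 0 →
      (⟪v, (B : H →L[ℂ] H) v⟫).re ≤ m ^ 2 * (⟪v, (A : H →L[ℂ] H) v⟫).re := by
    intro v hv
    have hv0 : v ≠ 0 := by rintro rfl; simp at hv
    set c : ℝ := ‖v‖ with hc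
    have hcpos : 0 < c := norm_pos_iff.mpr hv0
    set w : H := ((c⁻¹ : ℝ) : ℂ) • v with hw
    have hwnorm : ‖w‖ = 1 := by
      rw [hw, norm_smul]
      rw [Complex.norm_real, Real.norm_eq_abs, abs_of_pos (inv_pos.mpr hcpos)]
      exact inv_mul_cancel₀ hcpos.ne'
    have hscale : ∀ T : 𝔄, ⟪w, (T : H →L[ℂ] H) w⟫
        = ((c⁻¹ * c⁻¹ : ℝ) : ℂ) * ⟪v, (T : H →L[ℂ] H) v⟫ := by
      intro T
      rw [hw, map_smul, inner_smul_left, inner_smul_right, Complex.conj_ofReal]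
      push_cast
      ring
    have hAw : (⟪w, (A : H →L[ℂ] H) w⟫).re
        = (c⁻¹ * c⁻¹) * (⟪v, (A : H →L[ℂ] H) v⟫).re := by
      rw [hscale A, Complex.re_ofReal_mul]
    have hBw : (⟪w, (B : H →L[ℂ] H) w⟫).re
        = (c⁻¹ * c⁻¹) * (⟪v, (B : H →L[ℂ] H) v⟫).re := by
      rw [hscale B, Complex.re_ofReal_mul]
    have hAre : (⟪w, (A : H →L[ℂ] H) w⟫).re ≠ 0 := by
      rw [hAw]
      exact mul_ne_zero (by positivity) hv
    have hfA : vstate 𝔄 w A ≠ 0 := by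
      intro h
      apply hAre
      rw [← vstate_apply 𝔄 w A, h]
      simp
    have hstate := vstate_isState 𝔄 hwnorm
    have hle : ENNReal.ofReal (Real.sqrt (((vstate 𝔄 w) (star Y * A * Y)).re
        / ((vstate 𝔄 w) A).re)) ≤ Anorm A Y :=
      le_iSup (fun f : {f : 𝔄 →L[ℂ] ℂ // IsState f ∧ f A ≠ 0} =>
        ENNReal.ofReal (Real.sqrt ((f.1 (star Y * A * Y)).re / (f.1 A).re)))
        ⟨vstate 𝔄 w, hstate, hfA⟩
    have hsqrt : Real.sqrt (((vstate 𝔄 w) (star Y * A * Y)).re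
        / ((vstate 𝔄 w) A).re) ≤ m :=
      (ENNReal.ofReal_le_iff_le_toReal hY).mp hle
    have hApos : 0 < (⟪w, (A : H →L[ℂ] H) w⟫).re := by
      rcases (hAp.re_inner_nonneg_right w).lt_or_eq with h | h
      · exact h
      · exact absurd h.symm hAre
    have hBpos : 0 ≤ (⟪w, (B : H →L[ℂ] H) w⟫).re := hBp.re_inner_nonneg_right w
    have hq : (⟪w, (B : H →L[ℂ] H) w⟫).re / (⟪w, (A : H →L[ℂ] H) w⟫).re ≤ m ^ 2 := by
      have hq0 : 0 ≤ (⟪w, (B : H →L[ℂ] H) w⟫).re / (⟪w, (A : H →L[ℂ] H) w⟫).re :=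
        div_nonneg hBpos hApos.le
      rw [vstate_apply, vstate_apply, ← hBdef] at hsqrt
      nlinarith [Real.sq_sqrt hq0, Real.sqrt_nonneg ((⟪w, (B : H →L[ℂ] H) w⟫).re
        / (⟪w, (A : H →L[ℂ] H) w⟫).re)]
    have hfin : (⟪w, (B : H →L[ℂ] H) w⟫).re ≤ m ^ 2 * (⟪w, (A : H →L[ℂ] H) w⟫).re :=
      (div_le_iff₀ hApos).mp hq
    rw [hAw, hBw] at hfin
    have hvApos : 0 < (⟪v, (A : H →L[ℂ] H) v⟫).re := by
      rcases (hAp.re_inner_nonneg_right v).lt_or_eq with h | h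
      · exact h
      · exact absurd h.symm hv
    have hc2 : 0 < c⁻¹ * c⁻¹ := by positivity
    nlinarith [hfin]
  -- Step 2: find w₀ with positive A-inner product
  obtain ⟨w₀, hw₀⟩ : ∃ w₀ : H, (⟪w₀, (A : H →L[ℂ] H) w₀⟫).re ≠ 0 := by
    by_contra h
    push_neg at h
    apply hA0
    have hzero : (A : H →L[ℂ] H) = 0 := by
      have hker := (inner_map_self_eq_zero
        ((A : H →L[ℂ] H) : H →ₗ[ℂ] H)).mp ?_
      · ext x
        exact congrFun (congrArg DFunLike.coe hker) x
      · intro x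
        have h1 : ContinuousLinearMap.reApplyInnerSelf (A : H →L[ℂ] H) x = 0 := by
          rw [ContinuousLinearMap.reApplyInnerSelf, inner_re_symm]
          simpa using h x
        calc ⟪((A : H →L[ℂ] H) : H →ₗ[ℂ] H) x, x⟫
            = ((ContinuousLinearMap.reApplyInnerSelf (A : H →L[ℂ] H) x : ℝ) : ℂ) :=
              (hAsym.coe_reApplyInnerSelf_apply x).symm
          _ = 0 := by rw [h1]; simp
    exact Subtype.ext hzero
  have hw₀pos : 0 < (⟪w₀, (A : H →L[ℂ] H) w₀⟫).re := by
    rcases (hAp.re_inner_nonneg_right w₀).lt_or_eq with h | h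
    · exact h
    · exact absurd h.symm hw₀
  set a₀ : ℝ := (⟪w₀, (A : H →L[ℂ] H) w₀⟫).re with ha₀
  set b₀ : ℝ := (⟪u, (B : H →L[ℂ] H) u⟫).re with hb₀
  set r : ℝ := (⟪u, (B : H →L[ℂ] H) w₀⟫).re with hr
  set b₁ : ℝ := (⟪w₀, (B : H →L[ℂ] H) w₀⟫).re with hb₁
  have hb₁0 : 0 ≤ b₁ := hBp.re_inner_nonneg_right w₀
  -- Step 3: for all real t ≠ 0, b₀ + 2 t r + t² b₁ ≤ m² t² a₀
  have C2 : ∀ t : ℝ, t ≠ 0 → b₀ + 2 * t * r + t ^ 2 * b₁ ≤ m ^ 2 * (t ^ 2 * a₀) := by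
    intro t ht
    set v : H := u + (t : ℂ) • w₀ with hv
    have hAsym' : ∀ x y : H, ⟪(A : H →L[ℂ] H) x, y⟫ = ⟪x, (A : H →L[ℂ] H) y⟫ :=
      fun x y => hAsym x y
    have huAw : ⟪u, (A : H →L[ℂ] H) w₀⟫ = 0 := by
      rw [← hAsym' u w₀, hu, inner_zero_left]
    have hAv : ⟪v, (A : H →L[ℂ] H) v⟫
        = ((t * t : ℝ) : ℂ) * ⟪w₀, (A : H →L[ℂ] H) w₀⟫ := by
      rw [hv, map_add, map_smul]
      simp only [inner_add_left, inner_add_right, inner_smul_left, inner_smul_right,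
        Complex.conj_ofReal, hu, huAw, inner_zero_right, mul_zero, add_zero, zero_add]
      push_cast
      ring
    have hBv : ⟪v, (B : H →L[ℂ] H) v⟫ = ⟪u, (B : H →L[ℂ] H) u⟫
        + (t : ℂ) * ⟪u, (B : H →L[ℂ] H) w₀⟫ + (t : ℂ) * ⟪w₀, (B : H →L[ℂ] H) u⟫
        + ((t * t : ℝ) : ℂ) * ⟪w₀, (B : H →L[ℂ] H) w₀⟫ := by
      rw [hv, map_add, map_smul]
      simp only [inner_add_left, inner_add_right, inner_smul_left, inner_smul_right,
        Complex.conj_ofReal]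
      push_cast
      ring
    have hBsym' : ∀ x y : H, ⟪(B : H →L[ℂ] H) x, y⟫ = ⟪x, (B : H →L[ℂ] H) y⟫ :=
      fun x y => hBsym x y
    have hBre : (⟪w₀, (B : H →L[ℂ] H) u⟫).re = r := by
      rw [hr]
      have h1 : ⟪w₀, (B : H →L[ℂ] H) u⟫ = (starRingEnd ℂ) ⟪u, (B : H →L[ℂ] H) w₀⟫ := by
        rw [← hBsym' w₀ u]
        exact (inner_conj_symm _ _).symm
      rw [h1, Complex.conj_re]
    have hvAre : (⟪v, (A : H →L[ℂ] H) v⟫).re = t ^ 2 * a₀ := by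
      rw [hAv, Complex.re_ofReal_mul, ← ha₀]; ring
    have hvAne : (⟪v, (A : H →L[ℂ] H) v⟫).re ≠ 0 := by
      rw [hvAre]
      exact mul_ne_zero (pow_ne_zero 2 ht) hw₀pos.ne'
    have hineq := C1 v hvAne
    rw [hvAre, hBv] at hineq
    simp only [Complex.add_re, Complex.re_ofReal_mul, Complex.mul_re, Complex.ofReal_re,
      Complex.ofReal_im] at hineq
    rw [hBre] at hineq
    simp only [← hb₀, ← hr, ← hb₁] at hineq
    nlinarith [hineq]
  -- Step 4: conclude b₀ ≤ 0
  have hb₀le : b₀ ≤ 0 := by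
    refine nonpos_of_forall_pos_le_sq (K := m ^ 2 * a₀) fun t ht => ?_
    rcases le_or_gt r 0 with hrle | hrlt
    · have := C2 (-t) (neg_ne_zero.mpr ht.ne')
      nlinarith
    · have := C2 t ht.ne'
      nlinarith
  have hb₀ge : 0 ≤ b₀ := hBp.re_inner_nonneg_right u
  have heqz : (⟪(Y : H →L[ℂ] H) u, (A : H →L[ℂ] H) ((Y : H →L[ℂ] H) u)⟫).re = 0 := by
    have hform : ⟪u, (B : H →L[ℂ] H) u⟫
        = ⟪(Y : H →L[ℂ] H) u, (A : H →L[ℂ] H) ((Y : H →L[ℂ] H) u)⟫ := by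
      rw [hBcoe]
      simp only [ContinuousLinearMap.comp_apply]
      rw [ContinuousLinearMap.adjoint_inner_right]
    have : (⟪u, (B : H →L[ℂ] H) u⟫).re = 0 := le_antisymm hb₀le hb₀ge
    rw [← hform]
    exact this
  exact posop_apply_eq_zero hAp heqz

end Helpers

/-- `X ∈ 𝔄^A` is `A`-invertible in `𝔄^A` iff there is `Y ∈ 𝔄^A` with `A X Y = A` and
`ker (A X) ⊆ ker A`. -/
theorem aInvertible_iff_right_inv_and_ker {H : Type*} [NormedAddCommGroup H]
    [InnerProductSpace ℂ H] [CompleteSpace H]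
    (𝔄 : StarSubalgebra ℂ (H →L[ℂ] H)) (hclosed : IsClosed (𝔄 : Set (H →L[ℂ] H)))
    (A : 𝔄) (hA : 0 ≤ (A : H →L[ℂ] H)) (hA0 : A ≠ 0)
    (X : 𝔄) (hX : Anorm A X ≠ ⊤) :
    (∃ Y : 𝔄, Anorm A Y ≠ ⊤ ∧ A * X * Y = A ∧ A * Y * X = A) ↔
      (∃ Y : 𝔄, Anorm A Y ≠ ⊤ ∧ A * X * Y = A ∧
        LinearMap.ker (((A : H →L[ℂ] H) * (X : H →L[ℂ] H) : H →L[ℂ] H) : H →ₗ[ℂ] H) ≤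
          LinearMap.ker ((A : H →L[ℂ] H) : H →ₗ[ℂ] H)) := by
  constructor
  · rintro ⟨Y, hY, h1, h2⟩
    refine ⟨Y, hY, h1, ?_⟩
    intro u hu
    simp only [LinearMap.mem_ker, ContinuousLinearMap.coe_coe] at hu ⊢
    rw [ContinuousLinearMap.mul_apply] at hu
    have hYX : (A : H →L[ℂ] H) ((Y : H →L[ℂ] H) ((X : H →L[ℂ] H) u)) = 0 :=
      ker_stable 𝔄 A hA hA0 Y hY hu
    have happ := congrArg (fun T : 𝔄 => (T : H →L[ℂ] H) u) h2
    simp only [MulMemClass.coe_mul, ContinuousLinearMap.mul_apply] at happ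
    rw [← happ, hYX]
  · rintro ⟨Y, hY, h1, hker⟩
    refine ⟨Y, hY, h1, ?_⟩
    apply Subtype.ext
    simp only [MulMemClass.coe_mul]
    ext u
    simp only [ContinuousLinearMap.mul_apply]
    have h1' := congrArg (fun T : 𝔄 => (T : H →L[ℂ] H) ((X : H →L[ℂ] H) u)) h1
    simp only [MulMemClass.coe_mul, ContinuousLinearMap.mul_apply] at h1'
    have hmem : ((Y : H →L[ℂ] H) ((X : H →L[ℂ] H) u) - u) ∈
        LinearMap.ker (((A : H →L[ℂ] H) * (X : H →L[ℂ] H) : H →L[ℂ] H) : H →ₗ[ℂ] H) := by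
      rw [LinearMap.mem_ker, ContinuousLinearMap.coe_coe, ContinuousLinearMap.mul_apply, map_sub, map_sub, h1', sub_self]
    have hk := hker hmem
    rw [LinearMap.mem_ker, ContinuousLinearMap.coe_coe, map_sub, sub_eq_zero] at hk
    exact hk
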